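/- For all natural numbers a, b ≥ 0, Σ_{z=0}^{min(a,b)} (z + 1/2) / ( (a+z+1)!·(a−z)!·(b+z+1)!·(b−z)! ) = 1 / ( 2·(a+b+1)·(a!)²·(b!)² ), as an identity of rational numbers. -/

import Mathlib

set_option maxHeartbeats 1000000

open Finset Nat

noncomputable def Gfun (a b z : ℕ) : ℚ :=
  if z ≤ min a b then
    1 / (2 * (a + b + 1) * (a + z)! * (a - z)! * (b + z)! * (b - z)!) else 0

lemma term_eq (a b z : ℕ) (hz : z ≤ min a b) :
    ((z : ℚ) + 1 / 2) / ((a + z + 1)! * (a - z)! * (b + z + 1)! * (b - z)!)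
      = Gfun a b z - Gfun a b (z + 1) := by
  have hza : z ≤ a := le_trans hz (min_le_left a b)
  have hzb : z ≤ b := le_trans hz (min_le_right a b)
  by_cases h1 : z + 1 ≤ min a b
  · -- middle case
    obtain ⟨i, rfl⟩ : ∃ i, a = z + 1 + i := ⟨a - z - 1, by omega⟩
    obtain ⟨j, rfl⟩ : ∃ j, b = z + 1 + j := ⟨b - z - 1, by omega⟩
    rw [Gfun, Gfun, if_pos hz, if_pos h1]
    have e1 : z + 1 + i + z + 1 = (2*z + 1 + i) + 1 := by ring
    have e2 : z + 1 + i + z = 2*z + 1 + i := by ring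
    have e3 : z + 1 + i - z = i + 1 := by omega
    have e4 : z + 1 + i - (z+1) = i := by omega
    have e1' : z + 1 + j + z + 1 = (2*z + 1 + j) + 1 := by ring
    have e2' : z + 1 + j + z = 2*z + 1 + j := by ring
    have e3' : z + 1 + j - z = j + 1 := by omega
    have e4' : z + 1 + j - (z+1) = j := by omega
    have e5 : z + 1 + i + (z+1) = (2*z + 1 + i) + 1 := by ring
    have e5' : z + 1 + j + (z+1) = (2*z + 1 + j) + 1 := by ring
    rw [e1, e2, e3, e4, e5, e1', e2', e3', e4', e5', factorial_succ (2*z+1+i),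
      factorial_succ (2*z+1+j), factorial_succ i, factorial_succ j]
    have f1 : ((2*z+1+i)! : ℚ) ≠ 0 := by exact_mod_cast (2*z+1+i).factorial_ne_zero
    have f2 : ((2*z+1+j)! : ℚ) ≠ 0 := by exact_mod_cast (2*z+1+j).factorial_ne_zero
    have f3 : ((i)! : ℚ) ≠ 0 := by exact_mod_cast i.factorial_ne_zero
    have f4 : ((j)! : ℚ) ≠ 0 := by exact_mod_cast j.factorial_ne_zero
    push_cast
    set A := ((2*z+1+i)! : ℚ) with hA
    set B := ((2*z+1+j)! : ℚ) with hB
    set I := ((i)! : ℚ) with hI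
    set J := ((j)! : ℚ) with hJ
    have f5 : ((z:ℚ) + 1 + i + (z + 1 + j) + 1) ≠ 0 := by positivity
    have f6 : (2*(z:ℚ) + 1 + i + 1) ≠ 0 := by positivity
    have f7 : (2*(z:ℚ) + 1 + j + 1) ≠ 0 := by positivity
    have f8 : ((i:ℚ) + 1) ≠ 0 := by positivity
    have f9 : ((j:ℚ) + 1) ≠ 0 := by positivity
    field_simp
    ring
  · -- z = min a b
    have hzmin : z = min a b := by omega
    rw [Gfun, Gfun, if_pos hz, if_neg (by omega)]
    have key : ((a:ℚ) + z + 1) * (b + z + 1) = (2*z+1) * (a + b + 1) := by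
      have : z = a ∨ z = b := by omega
      rcases this with rfl | rfl
      · push_cast; ring
      · push_cast; ring
    rw [show a + z + 1 = (a + z) + 1 from rfl, show b + z + 1 = (b + z) + 1 from rfl,
      factorial_succ (a+z), factorial_succ (b+z)]
    have f1 : ((a+z)! : ℚ) ≠ 0 := by exact_mod_cast (a+z).factorial_ne_zero
    have f2 : ((b+z)! : ℚ) ≠ 0 := by exact_mod_cast (b+z).factorial_ne_zero
    have f3 : ((a-z)! : ℚ) ≠ 0 := by exact_mod_cast (a-z).factorial_ne_zero
    have f4 : ((b-z)! : ℚ) ≠ 0 := by exact_mod_cast (b-z).factorial_ne_zero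
    have f5 : ((a:ℚ) + b + 1) ≠ 0 := by positivity
    have f6 : ((a:ℚ) + z + 1) ≠ 0 := by positivity
    have f7 : ((b:ℚ) + z + 1) ≠ 0 := by positivity
    push_cast
    rw [sub_zero]
    field_simp
    linear_combination (-1 : ℚ) * key

theorem factsum2 (a b : ℕ) :
    ∑ z ∈ range (min a b + 1),
        ((z : ℚ) + 1 / 2) / ((a + z + 1)! * (a - z)! * (b + z + 1)! * (b - z)!)
      = 1 / (2 * (a + b + 1) * (a !) ^ 2 * (b !) ^ 2) := by
  rw [Finset.sum_congr rfl (fun z hz => term_eq a b z (by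
        simpa using Nat.lt_succ_iff.mp (Finset.mem_range.mp hz))),
    Finset.sum_range_sub' (Gfun a b)]
  rw [Gfun, Gfun, if_pos (Nat.zero_le _), if_neg (by omega)]
  simp only [Nat.add_zero, Nat.sub_zero, sub_zero]
  ring
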